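/- Let f : {-1,1}^n → ℝ satisfy Σ_{S⊆{1,...,n}} |f̂(S)| ≤ s and be (ε/4, d)-concentrated, i.e., Σ_{S : |S| > d} f̂(S)² ≤ ε/4. Let h be the polynomial consisting of the constant term of f together with all Fourier terms of f of degree at most d whose coefficient has magnitude at least ε/(4s), and set g = f − h. Then E_{x uniform on {-1,1}^n}[g(x)²] = Σ_{S : |S| > d} f̂(S)² + Σ_{R : |R| ≤ d, R ≠ ∅, |f̂(R)| < ε/(4s)} f̂(R)² ≤ ε/2. -/

import Mathlib

open Finset
open scoped Classical

noncomputable def cube (n : ℕ) : Finset (Fin n → ℝ) :=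
  Fintype.piFinset fun _ => ({-1, 1} : Finset ℝ)

def chi {n : ℕ} (S : Finset (Fin n)) (x : Fin n → ℝ) : ℝ := ∏ i ∈ S, x i

noncomputable def expectation {n : ℕ} (g : (Fin n → ℝ) → ℝ) : ℝ :=
  (2 ^ n : ℝ)⁻¹ * ∑ x ∈ cube n, g x

noncomputable def fhat {n : ℕ} (f : (Fin n → ℝ) → ℝ) (S : Finset (Fin n)) : ℝ :=
  expectation fun x => f x * chi S x

lemma cube_mem {n : ℕ} {x : Fin n → ℝ} (hx : x ∈ cube n) (i : Fin n) :
    x i = -1 ∨ x i = 1 := by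
  rw [cube, Fintype.mem_piFinset] at hx
  simpa using hx i

lemma sum_chi_mul {n : ℕ} (S T : Finset (Fin n)) :
    ∑ x ∈ cube n, chi S x * chi T x = if S = T then (2 ^ n : ℝ) else 0 := by
  have key : ∑ x ∈ cube n, chi S x * chi T x
      = ∏ i : Fin n, ∑ a ∈ ({-1, 1} : Finset ℝ),
          (if i ∈ S then a else 1) * (if i ∈ T then a else 1) := by
    rw [Finset.prod_univ_sum]
    apply Finset.sum_congr rfl
    intro x _
    rw [chi, chi,
      show (∏ i ∈ S, x i) = ∏ i : Fin n, (if i ∈ S then x i else 1) by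
        rw [Finset.prod_ite_mem, Finset.univ_inter],
      show (∏ i ∈ T, x i) = ∏ i : Fin n, (if i ∈ T then x i else 1) by
        rw [Finset.prod_ite_mem, Finset.univ_inter],
      ← Finset.prod_mul_distrib]
  by_cases hST : S = T
  · subst hST
    rw [if_pos rfl, key]
    have hfac : ∀ i : Fin n, (∑ a ∈ ({-1, 1} : Finset ℝ),
        (if i ∈ S then a else 1) * (if i ∈ S then a else 1)) = 2 := by
      intro i
      rw [Finset.sum_pair (by norm_num : (-1 : ℝ) ≠ 1)]
      by_cases h : i ∈ S <;> simp [h] <;> norm_num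
    rw [Finset.prod_congr rfl fun i _ => hfac i, Finset.prod_const, Finset.card_univ,
      Fintype.card_fin]
  · rw [if_neg hST, key]
    obtain ⟨i, hi⟩ : ∃ i, (i ∈ S ∧ i ∉ T) ∨ (i ∈ T ∧ i ∉ S) := by
      by_contra hc
      push_neg at hc
      exact hST (Finset.ext fun j => ⟨fun hj => (hc j).1 hj, fun hj => (hc j).2 hj⟩)
    apply Finset.prod_eq_zero (Finset.mem_univ i)
    rw [Finset.sum_pair (by norm_num : (-1 : ℝ) ≠ 1)]
    rcases hi with ⟨h1, h2⟩ | ⟨h1, h2⟩ <;> simp [h1, h2]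

lemma sum_chi_chi {n : ℕ} {x y : Fin n → ℝ} (hx : x ∈ cube n) (hy : y ∈ cube n) :
    ∑ S : Finset (Fin n), chi S y * chi S x = if y = x then (2 ^ n : ℝ) else 0 := by
  have h2 : ∑ S : Finset (Fin n), ∏ i ∈ S, (y i * x i)
      = ∏ i : Fin n, (y i * x i + 1) := by
    rw [Finset.prod_add]
    simp [Finset.powerset_univ]
  rw [Finset.sum_congr rfl fun S _ =>
    show chi S y * chi S x = ∏ i ∈ S, (y i * x i) by
      rw [chi, chi, Finset.prod_mul_distrib], h2]
  by_cases hxy : y = x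
  · subst hxy
    rw [if_pos rfl]
    have hfac : ∀ i : Fin n, y i * y i + 1 = 2 := by
      intro i; rcases cube_mem hy i with h | h <;> rw [h] <;> norm_num
    rw [Finset.prod_congr rfl fun i _ => hfac i, Finset.prod_const, Finset.card_univ,
      Fintype.card_fin]
  · rw [if_neg hxy]
    obtain ⟨i, hi⟩ : ∃ i, y i ≠ x i := by
      by_contra hc; push_neg at hc; exact hxy (funext hc)
    apply Finset.prod_eq_zero (Finset.mem_univ i)
    rcases cube_mem hy i with h1 | h1 <;> rcases cube_mem hx i with h2 | h2 <;>
      rw [h1, h2] at hi ⊢ <;> first | exact absurd rfl hi | norm_num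

lemma inversion {n : ℕ} (f : (Fin n → ℝ) → ℝ) {x : Fin n → ℝ} (hx : x ∈ cube n) :
    ∑ S : Finset (Fin n), fhat f S * chi S x = f x := by
  have h2n : (2 : ℝ) ^ n ≠ 0 := by positivity
  have step : ∀ S : Finset (Fin n), fhat f S * chi S x
      = (2 ^ n : ℝ)⁻¹ * ∑ y ∈ cube n, f y * (chi S y * chi S x) := by
    intro S
    rw [fhat, expectation, mul_assoc, Finset.sum_mul]
    congr 1
    exact Finset.sum_congr rfl fun y _ => by ring
  rw [Finset.sum_congr rfl fun S _ => step S, ← Finset.mul_sum, Finset.sum_comm]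
  have : ∀ y ∈ cube n, ∑ S : Finset (Fin n), f y * (chi S y * chi S x)
      = f y * if y = x then (2 ^ n : ℝ) else 0 := by
    intro y hy
    rw [← Finset.mul_sum, sum_chi_chi hx hy]
  rw [Finset.sum_congr rfl this]
  simp only [mul_ite, mul_zero]
  rw [Finset.sum_ite_eq' (cube n) x (fun y => f y * 2 ^ n), if_pos hx]
  field_simp

set_option maxHeartbeats 1000000 in
/-- For f that is (ε/4,d)-concentrated with Fourier L1 norm at most s, let h keep the
constant term together with all degree-≤-d terms of coefficient magnitude at least ε/(4s),
and let g = f - h.  Then E[g²] equals the Fourier mass of f above degree d plus the mass of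
the small nonconstant low-degree coefficients, and this is at most ε/2. -/
theorem tail_mass_bound (n d : ℕ) (f : (Fin n → ℝ) → ℝ) (s ε : ℝ)
    (hL1 : ∑ S : Finset (Fin n), |fhat f S| ≤ s)
    (hconc : ∑ S ∈ Finset.univ.filter (fun S : Finset (Fin n) => d < S.card),
        fhat f S ^ 2 ≤ ε / 4)
    (h g : (Fin n → ℝ) → ℝ)
    (hh : h = fun x =>
      ∑ S ∈ insert (∅ : Finset (Fin n))
          (Finset.univ.filter fun S : Finset (Fin n) =>
            S.card ≤ d ∧ ε / (4 * s) ≤ |fhat f S|),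
        fhat f S * chi S x)
    (hg : ∀ x, g x = f x - h x) :
    expectation (fun x => g x ^ 2)
        = ∑ S ∈ Finset.univ.filter (fun S : Finset (Fin n) => d < S.card), fhat f S ^ 2
          + ∑ R ∈ Finset.univ.filter (fun R : Finset (Fin n) =>
              R.card ≤ d ∧ R ≠ ∅ ∧ |fhat f R| < ε / (4 * s)), fhat f R ^ 2 ∧
    expectation (fun x => g x ^ 2) ≤ ε / 2 := by
  have h2n : (2 : ℝ) ^ n ≠ 0 := by positivity
  set K : Finset (Finset (Fin n)) := insert (∅ : Finset (Fin n))
      (Finset.univ.filter fun S : Finset (Fin n) =>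
        S.card ≤ d ∧ ε / (4 * s) ≤ |fhat f S|) with hKdef
  set Kc : Finset (Finset (Fin n)) := Finset.univ \ K with hKcdef
  -- g on the cube equals the tail expansion
  have hgx : ∀ x ∈ cube n, g x = ∑ S ∈ Kc, fhat f S * chi S x := by
    intro x hx
    rw [hg, hh, ← inversion f hx, hKcdef,
      Finset.sum_sdiff_eq_sub (Finset.subset_univ K)]
  -- Parseval for the tail
  have hEg : expectation (fun x => g x ^ 2) = ∑ S ∈ Kc, fhat f S ^ 2 := by
    have e1 : expectation (fun x => g x ^ 2)
        = (2 ^ n : ℝ)⁻¹ * ∑ x ∈ cube n, ∑ S ∈ Kc, ∑ T ∈ Kc,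
            (fhat f S * fhat f T) * (chi S x * chi T x) := by
      rw [expectation]
      congr 1
      apply Finset.sum_congr rfl
      intro x hx
      rw [hgx x hx, sq, Finset.sum_mul_sum]
      exact Finset.sum_congr rfl fun S _ => Finset.sum_congr rfl fun T _ => by ring
    rw [e1, Finset.sum_comm]
    have e2 : ∀ S ∈ Kc, ∑ x ∈ cube n, ∑ T ∈ Kc,
        (fhat f S * fhat f T) * (chi S x * chi T x) = fhat f S ^ 2 * 2 ^ n := by
      intro S hS
      rw [Finset.sum_comm]
      have : ∀ T ∈ Kc, ∑ x ∈ cube n, (fhat f S * fhat f T) * (chi S x * chi T x)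
          = if S = T then fhat f S * fhat f T * 2 ^ n else 0 := by
        intro T _
        rw [← Finset.mul_sum, sum_chi_mul S T]
        by_cases hST : S = T <;> simp [hST]
      rw [Finset.sum_congr rfl this, Finset.sum_ite_eq Kc S
        (fun T => fhat f S * fhat f T * 2 ^ n), if_pos hS]
      ring
    rw [Finset.sum_congr rfl e2, ← Finset.sum_mul]
    field_simp
  -- split the tail sum
  have hsplit : ∑ S ∈ Kc, fhat f S ^ 2
      = ∑ S ∈ Finset.univ.filter (fun S : Finset (Fin n) => d < S.card), fhat f S ^ 2
        + ∑ R ∈ Finset.univ.filter (fun R : Finset (Fin n) =>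
            R.card ≤ d ∧ R ≠ ∅ ∧ |fhat f R| < ε / (4 * s)), fhat f R ^ 2 := by
    have hKc : Kc = Finset.univ.filter (fun S : Finset (Fin n) => S ∉ K) := by
      rw [hKcdef, Finset.sdiff_eq_filter]
    rw [hKc, Finset.sum_filter, Finset.sum_filter, Finset.sum_filter,
      ← Finset.sum_add_distrib]
    apply Finset.sum_congr rfl
    intro S _
    have hmem : S ∈ K ↔ S = ∅ ∨ (S.card ≤ d ∧ ε / (4 * s) ≤ |fhat f S|) := by
      simp [hKdef]
    by_cases h1 : d < S.card
    · have hne : S ≠ ∅ := by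
        intro he; rw [he] at h1; simp at h1
      have hnK : S ∉ K := by
        rw [hmem]; push_neg
        exact ⟨Finset.nonempty_iff_ne_empty.mpr hne, fun hc => absurd hc (not_le.mpr h1)⟩
      simp [hnK, h1, not_le.mpr h1]
    · push_neg at h1
      by_cases h2 : S = ∅
      · subst h2
        have hK' : (∅ : Finset (Fin n)) ∈ K := hmem.mpr (Or.inl rfl)
        simp [hK', not_lt.mpr h1]
      · by_cases h3 : |fhat f S| < ε / (4 * s)
        · have hnK : S ∉ K := by
            rw [hmem]; push_neg
            exact ⟨Finset.nonempty_iff_ne_empty.mpr h2, fun _ => h3⟩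
          simp [hnK, not_lt.mpr h1, h1, h2, h3]
        · push_neg at h3
          have hK' : S ∈ K := hmem.mpr (Or.inr ⟨h1, h3⟩)
          simp [hK', not_lt.mpr h1, not_lt.mpr h3]
  -- bounds
  have hs0 : 0 ≤ s := le_trans (Finset.sum_nonneg fun S _ => abs_nonneg _) hL1
  have hε0 : 0 ≤ ε := by
    have h0 : (0:ℝ) ≤ ∑ S ∈ Finset.univ.filter (fun S : Finset (Fin n) => d < S.card),
        fhat f S ^ 2 := Finset.sum_nonneg fun S _ => sq_nonneg _
    linarith
  have hsum2 : ∑ R ∈ Finset.univ.filter (fun R : Finset (Fin n) =>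
      R.card ≤ d ∧ R ≠ ∅ ∧ |fhat f R| < ε / (4 * s)), fhat f R ^ 2 ≤ ε / 4 := by
    rcases eq_or_lt_of_le hs0 with hs | hs
    · have hz : ∀ S : Finset (Fin n), fhat f S = 0 := by
        intro S
        have h1 : |fhat f S| ≤ ∑ S : Finset (Fin n), |fhat f S| :=
          Finset.single_le_sum (f := fun S => |fhat f S|) (fun S _ => abs_nonneg _) (Finset.mem_univ S)
        have : |fhat f S| ≤ 0 := by rw [← hs] at hL1; linarith
        exact abs_nonpos_iff.mp this
      have : ∑ R ∈ Finset.univ.filter (fun R : Finset (Fin n) =>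
          R.card ≤ d ∧ R ≠ ∅ ∧ |fhat f R| < ε / (4 * s)), fhat f R ^ 2 = 0 := by
        apply Finset.sum_eq_zero; intro R _; rw [hz R]; ring
      rw [this]; linarith
    · have hb : 0 ≤ ε / (4 * s) := by positivity
      calc ∑ R ∈ Finset.univ.filter (fun R : Finset (Fin n) =>
              R.card ≤ d ∧ R ≠ ∅ ∧ |fhat f R| < ε / (4 * s)), fhat f R ^ 2
          ≤ ∑ R ∈ Finset.univ.filter (fun R : Finset (Fin n) =>
              R.card ≤ d ∧ R ≠ ∅ ∧ |fhat f R| < ε / (4 * s)), ε / (4 * s) * |fhat f R| := by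
            apply Finset.sum_le_sum
            intro R hR
            rw [Finset.mem_filter] at hR
            have h3 : |fhat f R| < ε / (4 * s) := hR.2.2.2
            have he : fhat f R ^ 2 = |fhat f R| * |fhat f R| := by
              rw [← sq_abs]; ring
            rw [he]
            exact mul_le_mul_of_nonneg_right h3.le (abs_nonneg _)
        _ = ε / (4 * s) * ∑ R ∈ Finset.univ.filter (fun R : Finset (Fin n) =>
              R.card ≤ d ∧ R ≠ ∅ ∧ |fhat f R| < ε / (4 * s)), |fhat f R| := by
            rw [Finset.mul_sum]
        _ ≤ ε / (4 * s) * s := by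
            apply mul_le_mul_of_nonneg_left _ hb
            exact le_trans (Finset.sum_le_sum_of_subset_of_nonneg
              (Finset.filter_subset _ _) fun _ _ _ => abs_nonneg _) hL1
        _ = ε / 4 := by field_simp
  refine ⟨hEg.trans hsplit, ?_⟩
  rw [hEg, hsplit]
  linarith
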